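/- arXiv:1402.1566 — 4 statements merged into one kernel-verified Lean document; each statement's English description precedes it below -/
import Mathlib

section
/- For every integer n ≥ 1: lim_{L→∞} Lⁿ · Σ_{m=1}^∞ (1/m²)·Γ(mL−n)/Γ(mL) = ζ(n+2), where L ranges over real numbers L > n (so that mL − n > 0 for all integers m ≥ 1) and ζ is the Riemann zeta function. -/
open MeasureTheory Filter Topology

private lemma gamma_prod_aux (x : ℝ) (hx : 0 < x) (n : ℕ) :
    Real.Gamma (x + n) = Real.Gamma x * ∏ k ∈ Finset.range n, (x + k) := by
  induction n with
  | zero => simp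
  | succ n ih =>
    have h1 : x + (n + 1 : ℕ) = (x + n) + 1 := by push_cast; ring
    have h2 : x + (n : ℝ) ≠ 0 := by positivity
    rw [h1, Real.Gamma_add_one h2, ih, Finset.prod_range_succ]
    ring

theorem stmt7 (n : ℕ) (hn : 1 ≤ n) :
    Tendsto
      (fun L : ℝ => ((L ^ n *
          ∑' m : ℕ, (1 / ((m : ℝ) + 1) ^ 2) *
            (Real.Gamma (((m : ℝ) + 1) * L - n) / Real.Gamma (((m : ℝ) + 1) * L)) : ℝ) : ℂ))
      atTop (nhds (riemannZeta ((n : ℂ) + 2))) := by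
  -- the limiting real sum
  set g : ℕ → ℝ := fun m => 1 / ((m : ℝ) + 1) ^ (n + 2) with hg
  have hgsum : Summable g := by
    have : Summable (fun m : ℕ => 1 / (m : ℝ) ^ (n + 2)) :=
      Real.summable_one_div_nat_pow.mpr (by omega)
    have := (summable_nat_add_iff 1).mpr this
    refine this.congr fun m => ?_
    simp [hg]
  -- the parametrized family
  set f : ℝ → ℕ → ℝ := fun L m =>
    (1 / ((m : ℝ) + 1) ^ 2) * ∏ k ∈ Finset.range n, (L / (((m : ℝ) + 1) * L - n + k)) with hf
  -- pointwise limits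
  have hlim : ∀ m : ℕ, Tendsto (fun L => f L m) atTop (𝓝 (g m)) := by
    intro m
    have hm1 : ((m : ℝ) + 1) ≠ 0 := by positivity
    have hfac : ∀ k ∈ Finset.range n,
        Tendsto (fun L : ℝ => L / (((m : ℝ) + 1) * L - n + k)) atTop (𝓝 (1 / ((m : ℝ) + 1))) := by
      intro k hk
      have h0 : Tendsto (fun L : ℝ => ((m : ℝ) + 1) + ((k : ℝ) - n) / L) atTop
          (𝓝 (((m : ℝ) + 1) + 0)) :=
        tendsto_const_nhds.add (Tendsto.div_atTop tendsto_const_nhds tendsto_id)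
      have hne : ((m : ℝ) + 1) + 0 ≠ 0 := by rw [add_zero]; positivity
      have h1 : Tendsto (fun L : ℝ => 1 / (((m : ℝ) + 1) + ((k : ℝ) - n) / L)) atTop
          (𝓝 (1 / (((m : ℝ) + 1) + 0))) := Tendsto.div tendsto_const_nhds h0 hne
      rw [add_zero] at h1
      refine Tendsto.congr' ?_ h1
      filter_upwards [eventually_gt_atTop ((n : ℝ) + 1)] with L hL
      have hL0 : L ≠ 0 := (lt_trans (by positivity) hL).ne'
      have hD : ((m : ℝ) + 1) * L - n + k ≠ 0 := by
        have : (n : ℝ) < L := by linarith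
        have h1L : L ≤ ((m : ℝ) + 1) * L := by nlinarith [Nat.cast_nonneg (α := ℝ) m]
        have : (0 : ℝ) ≤ (k : ℝ) := Nat.cast_nonneg k
        nlinarith
      have hrw : ((m : ℝ) + 1 + ((k : ℝ) - ↑n) / L) = (((m : ℝ) + 1) * L - ↑n + ↑k) / L := by
        field_simp
        ring
      rw [hrw, one_div_div]
    have hprod := tendsto_finset_prod (Finset.range n) hfac
    have := (tendsto_const_nhds (x := 1 / ((m : ℝ) + 1) ^ 2) (f := atTop)).mul hprod
    refine Tendsto.congr' (by filter_upwards with L; rfl) (this.congr' ?_ |>.mono_right ?_)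
    · filter_upwards with L; rfl
    · rw [hg]
      have : (1 / ((m : ℝ) + 1) ^ 2) * ∏ _k ∈ Finset.range n, (1 / ((m : ℝ) + 1))
          = 1 / ((m : ℝ) + 1) ^ (n + 2) := by
        rw [Finset.prod_const, Finset.card_range]
        rw [one_div_pow, one_div_mul_one_div, ← pow_add]
        ring
      rw [this]
  -- uniform bound
  have hbound : ∀ᶠ L : ℝ in atTop, ∀ m : ℕ, ‖f L m‖ ≤ 2 ^ n * g m := by
    filter_upwards [eventually_ge_atTop ((2 : ℝ) * n + 1)] with L hL m
    have hm0 : (0 : ℝ) ≤ (m : ℝ) := Nat.cast_nonneg m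
    have hL1 : (1 : ℝ) ≤ L := by nlinarith [Nat.cast_nonneg (α := ℝ) n]
    have hLpos : (0 : ℝ) < L := by linarith
    have hden : ∀ k : ℕ, k ∈ Finset.range n → 0 < ((m : ℝ) + 1) * L - n + k := by
      intro k hk
      have h2n : (2 : ℝ) * n ≤ ((m : ℝ) + 1) * L := by nlinarith
      have hk0 : (0 : ℝ) ≤ (k : ℝ) := Nat.cast_nonneg k
      nlinarith [Nat.cast_nonneg (α := ℝ) n]
    have hfacb : ∀ k ∈ Finset.range n,
        L / (((m : ℝ) + 1) * L - n + k) ≤ 2 / ((m : ℝ) + 1) := by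
      intro k hk
      have hd := hden k hk
      rw [div_le_div_iff₀ hd (by positivity)]
      have h2n : (2 : ℝ) * n ≤ ((m : ℝ) + 1) * L := by nlinarith
      have hk0 : (0 : ℝ) ≤ (k : ℝ) := Nat.cast_nonneg k
      nlinarith
    have hfnn : 0 ≤ f L m := by
      rw [hf]
      refine mul_nonneg (by positivity) (Finset.prod_nonneg fun k hk => ?_)
      exact div_nonneg hLpos.le (hden k hk).le
    rw [Real.norm_eq_abs, abs_of_nonneg hfnn, hf, hg]
    have hprodle : ∏ k ∈ Finset.range n, (L / (((m : ℝ) + 1) * L - n + k))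
        ≤ ∏ _k ∈ Finset.range n, (2 / ((m : ℝ) + 1)) := by
      refine Finset.prod_le_prod (fun k hk => div_nonneg hLpos.le (hden k hk).le) hfacb
    calc (1 / ((m : ℝ) + 1) ^ 2) * ∏ k ∈ Finset.range n, (L / (((m : ℝ) + 1) * L - n + k))
        ≤ (1 / ((m : ℝ) + 1) ^ 2) * ∏ _k ∈ Finset.range n, (2 / ((m : ℝ) + 1)) := by
          exact mul_le_mul_of_nonneg_left hprodle (by positivity)
      _ = 2 ^ n * (1 / ((m : ℝ) + 1) ^ (n + 2)) := by
          rw [Finset.prod_const, Finset.card_range, div_pow]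
          field_simp
          ring
  -- dominated convergence
  have hmain : Tendsto (fun L : ℝ => ∑' m, f L m) atTop (𝓝 (∑' m, g m)) :=
    tendsto_tsum_of_dominated_convergence (hgsum.mul_left _) hlim hbound
  -- the original function eventually equals the sum of f
  have heq : ∀ᶠ L : ℝ in atTop,
      (L ^ n * ∑' m : ℕ, (1 / ((m : ℝ) + 1) ^ 2) *
        (Real.Gamma (((m : ℝ) + 1) * L - n) / Real.Gamma (((m : ℝ) + 1) * L)))
      = ∑' m, f L m := by
    filter_upwards [eventually_gt_atTop ((n : ℝ))] with L hL
    have hLpos : (0 : ℝ) < L := lt_of_le_of_lt (Nat.cast_nonneg n) hL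
    rw [← tsum_mul_left]
    refine tsum_congr fun m => ?_
    have hm0 : (0 : ℝ) ≤ (m : ℝ) := Nat.cast_nonneg m
    have hx : (0 : ℝ) < ((m : ℝ) + 1) * L - n := by nlinarith
    have hGamma : Real.Gamma (((m : ℝ) + 1) * L)
        = Real.Gamma (((m : ℝ) + 1) * L - n) * ∏ k ∈ Finset.range n, (((m : ℝ) + 1) * L - n + k) := by
      have := gamma_prod_aux (((m : ℝ) + 1) * L - n) hx n
      rw [← this]; ring_nf
    have hGpos : 0 < Real.Gamma (((m : ℝ) + 1) * L - n) := Real.Gamma_pos_of_pos hx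
    have hdpos : ∀ k ∈ Finset.range n, (0 : ℝ) < ((m : ℝ) + 1) * L - n + k := by
      intro k hk
      have : (0 : ℝ) ≤ (k : ℝ) := Nat.cast_nonneg k
      linarith
    have hppos : 0 < ∏ k ∈ Finset.range n, (((m : ℝ) + 1) * L - n + k) :=
      Finset.prod_pos hdpos
    have hpr : ∏ k ∈ Finset.range n, (L / (((m : ℝ) + 1) * L - n + k))
        = L ^ n / ∏ k ∈ Finset.range n, (((m : ℝ) + 1) * L - n + k) := by
      rw [Finset.prod_div_distrib, Finset.prod_const, Finset.card_range]
    rw [hf]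
    simp only []
    rw [hGamma, hpr]
    field_simp
  have hreal : Tendsto
      (fun L : ℝ => (L ^ n * ∑' m : ℕ, (1 / ((m : ℝ) + 1) ^ 2) *
        (Real.Gamma (((m : ℝ) + 1) * L - n) / Real.Gamma (((m : ℝ) + 1) * L))))
      atTop (𝓝 (∑' m, g m)) := hmain.congr' (heq.mono fun L h => h.symm)
  -- identify the limit with riemannZeta
  have hz : ((∑' m, g m : ℝ) : ℂ) = riemannZeta ((n : ℂ) + 2) := by
    have hre : 1 < Complex.re ((n : ℂ) + 2) := by
      simp only [Complex.add_re, Complex.natCast_re, Complex.re_ofNat]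
      have := Nat.cast_nonneg (α := ℝ) n
      linarith
    rw [zeta_eq_tsum_one_div_nat_add_one_cpow hre, Complex.ofReal_tsum]
    refine tsum_congr fun m => ?_
    have : ((n : ℂ) + 2) = ((n + 2 : ℕ) : ℂ) := by push_cast; ring
    rw [this, Complex.cpow_natCast, hg]
    push_cast
    ring
  rw [← hz]
  exact (Complex.continuous_ofReal.tendsto _).comp hreal
end

section
/- Let n ≥ 1 be an integer and for L > 0 set ε_L = 2·L^{−(n+1)}. There exist C > 0 and L₀ such that for all real L ≥ L₀: Σ_{m=1}^∞ (1/m²)·∫_{{z ∈ ℂⁿ : (ε_L/2)^{1/L} ≤ 1−|z|² ≤ ε_L^{1/L}}} (1−|z|²)^{mL−n−1} dν(z) ≤ C·(log L)^{n−1}/L^{2n+1}. -/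
open MeasureTheory

noncomputable section

/-- `|z|² = Σ |zⱼ|²`, the square of the Euclidean norm on ℂⁿ. -/
def enormSq {n : ℕ} (z : Fin n → ℂ) : ℝ := ∑ i, ‖z i‖ ^ 2

/-- Lebesgue measure on ℂⁿ normalised so that the unit ball has measure 1:
`ν = (n!/πⁿ) · (2n)-dimensional Lebesgue measure`. -/
def nuMeasure (n : ℕ) : Measure (Fin n → ℂ) :=
  ENNReal.ofReal (n.factorial / Real.pi ^ n) • volume

lemma enormSq_cont {n : ℕ} : Continuous (enormSq (n := n)) :=
  continuous_finset_sum _ fun i _ => (continuous_norm.comp (continuous_apply i)).pow 2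

lemma nu_ball (n : ℕ) (hn : 1 ≤ n) {t : ℝ} (ht : 0 ≤ t) :
    nuMeasure n {z : Fin n → ℂ | enormSq z ≤ t} = ENNReal.ofReal (t ^ n) := by
  have : Nonempty (Fin n) := ⟨⟨0, hn⟩⟩
  have hset : {z : Fin n → ℂ | enormSq z ≤ t}
      = {x : Fin n → ℂ | (∑ i, ‖x i‖ ^ (2:ℝ)) ^ ((1:ℝ)/2) ≤ Real.sqrt t} := by
    ext z
    have hs : (0:ℝ) ≤ ∑ i, ‖z i‖ ^ (2:ℝ) :=
      Finset.sum_nonneg fun i _ => Real.rpow_nonneg (norm_nonneg _) _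
    have he : enormSq z = ∑ i, ‖z i‖ ^ (2:ℝ) := by
      simp [enormSq, Real.rpow_natCast]
    simp only [Set.mem_setOf_eq, he, ← Real.sqrt_eq_rpow]
    exact ⟨fun h => Real.sqrt_le_sqrt h, fun h => (Real.sqrt_le_sqrt_iff ht).mp h⟩
  rw [hset, nuMeasure, Measure.smul_apply, smul_eq_mul,
    Complex.volume_sum_rpow_le (Fin n) one_le_two (Real.sqrt t)]
  have h2 : (2:ℝ) / 2 + 1 = ((1:ℕ) : ℝ) + 1 := by norm_num
  have h3 : 2 * (Fintype.card (Fin n) : ℝ) / 2 + 1 = (n : ℝ) + 1 := by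
    simp [Fintype.card_fin]
  rw [h2, h3, Real.Gamma_nat_eq_factorial, Real.Gamma_nat_eq_factorial]
  simp only [Nat.factorial_one, Nat.cast_one, mul_one, Fintype.card_fin]
  have hpi : (0:ℝ) < Real.pi ^ n := pow_pos Real.pi_pos n
  have hfac : (0:ℝ) < n.factorial := Nat.cast_pos.mpr n.factorial_pos
  rw [← mul_assoc, mul_comm (ENNReal.ofReal _) ((ENNReal.ofReal (Real.sqrt t)) ^ (2*n)),
    mul_assoc, ← ENNReal.ofReal_mul (by positivity)]
  have : (n.factorial : ℝ) / Real.pi ^ n * (Real.pi ^ n / n.factorial) = 1 := by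
    field_simp
  rw [this, ENNReal.ofReal_one, mul_one, ← ENNReal.ofReal_pow (Real.sqrt_nonneg t)]
  congr 1
  rw [pow_mul, Real.sq_sqrt ht]

lemma pow_sub_pow_le_aux {x y : ℝ} (hy : 0 ≤ y) (hxy : y ≤ x) :
    ∀ k : ℕ, x ^ (k+1) - y ^ (k+1) ≤ ((k:ℝ)+1) * x ^ k * (x - y) := by
  have hx : 0 ≤ x := hy.trans hxy
  intro k
  induction k with
  | zero => simp
  | succ j ih =>
    have h1 : y ^ (j+1) ≤ x ^ (j+1) := pow_le_pow_left₀ hy hxy _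
    calc x ^ (j+1+1) - y ^ (j+1+1)
        = x * (x ^ (j+1) - y ^ (j+1)) + (x - y) * y ^ (j+1) := by ring
      _ ≤ x * (((j:ℝ)+1) * x ^ j * (x - y)) + (x - y) * x ^ (j+1) :=
          add_le_add (mul_le_mul_of_nonneg_left ih hx)
            (mul_le_mul_of_nonneg_left h1 (by linarith))
      _ = (((j+1:ℕ):ℝ)+1) * x ^ (j+1) * (x - y) := by push_cast; ring

lemma pow_sub_pow_le {x y : ℝ} (hy : 0 ≤ y) (hxy : y ≤ x) {n : ℕ} (hn : 1 ≤ n) :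
    x ^ n - y ^ n ≤ (n:ℝ) * x ^ (n-1) * (x - y) := by
  have h := pow_sub_pow_le_aux hy hxy (n-1)
  have hn' : n - 1 + 1 = n := by omega
  rw [hn'] at h
  calc x ^ n - y ^ n ≤ (((n-1:ℕ):ℝ)+1) * x ^ (n-1) * (x - y) := h
    _ = (n:ℝ) * x ^ (n-1) * (x - y) := by
        rw [Nat.cast_sub hn]; push_cast; ring

set_option maxHeartbeats 1600000 in
theorem stmt8 (n : ℕ) (hn : 1 ≤ n) :
    ∃ C > (0:ℝ), ∃ L₀ : ℝ, ∀ L : ℝ, L₀ ≤ L →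
      (∑' m : ℕ, (1 / ((m : ℝ) + 1) ^ 2) *
        ∫ z in {z : Fin n → ℂ |
            (L ^ (-((n : ℝ) + 1))) ^ (1 / L) ≤ 1 - enormSq z ∧
            1 - enormSq z ≤ (2 * L ^ (-((n : ℝ) + 1))) ^ (1 / L)},
          (1 - enormSq z) ^ (((m : ℝ) + 1) * L - n - 1) ∂(nuMeasure n))
        ≤ C * (Real.log L) ^ (n - 1) / L ^ (2 * n + 1) := by
  have hn0 : (0:ℝ) < n := by exact_mod_cast hn
  have hcpos : (0:ℝ) < Real.log 2 / ((n:ℝ)+1)^2 :=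
    div_pos (Real.log_pos one_lt_two) (by positivity)
  obtain ⟨M0, hM0⟩ := Filter.eventually_atTop.mp
    (Real.isLittleO_log_id_atTop.def hcpos)
  refine ⟨24 * n * ((n:ℝ)+1)^(n-1), by positivity, max M0 (max 3 ((n:ℝ)+1)), fun L hL => ?_⟩
  have hL3 : (3:ℝ) ≤ L := le_trans (le_trans (le_max_left _ _) (le_max_right _ _)) hL
  have hLn : (n:ℝ)+1 ≤ L := le_trans (le_trans (le_max_right _ _) (le_max_right _ _)) hL
  have hL0 : (0:ℝ) < L := by linarith
  have hL1 : (1:ℝ) ≤ L := by linarith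
  have hlogpos : 0 < Real.log L := Real.log_pos (by linarith)
  have hlognorm := hM0 L (le_trans (le_max_left _ _) hL)
  simp only [Real.norm_eq_abs, id_eq, abs_of_pos hlogpos, abs_of_pos hL0] at hlognorm
  have hlog : ((n:ℝ)+1)^2 * (Real.log L / L) ≤ Real.log 2 := by
    rw [mul_comm, div_mul_eq_mul_div, div_le_iff₀ hL0]
    have h2 : (0:ℝ) < ((n:ℝ)+1)^2 := by positivity
    calc Real.log L * ((n:ℝ)+1)^2
        ≤ (Real.log 2 / ((n:ℝ)+1)^2 * L) * ((n:ℝ)+1)^2 :=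
          mul_le_mul_of_nonneg_right hlognorm h2.le
      _ = Real.log 2 * L := by field_simp
  -- abbreviations
  set a : ℝ := (L ^ (-((n : ℝ) + 1))) ^ (1 / L) with ha_def
  set ε : ℝ := 2 * L ^ (-((n : ℝ) + 1)) with hε_def
  set b : ℝ := ε ^ (1 / L) with hb_def
  set B : ℝ := ((n:ℝ)+1) * Real.log L / L with hB_def
  have hrpos : (0:ℝ) < L ^ (-((n : ℝ) + 1)) := Real.rpow_pos_of_pos hL0 _
  have hεpos : (0:ℝ) < ε := by rw [hε_def]; positivity
  have hlogr : Real.log (L ^ (-((n : ℝ) + 1))) = -(((n:ℝ)+1) * Real.log L) := by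
    rw [Real.log_rpow hL0]; ring
  have hlogε : Real.log ε = Real.log 2 - ((n:ℝ)+1) * Real.log L := by
    rw [hε_def, Real.log_mul two_ne_zero hrpos.ne', hlogr]; ring
  have ha_exp : a = Real.exp (-B) := by
    rw [ha_def, ← Real.rpow_mul hL0.le, Real.rpow_def_of_pos hL0, hB_def]
    congr 1; field_simp
  have hb_exp : b = Real.exp (Real.log 2 / L - B) := by
    rw [hb_def, Real.rpow_def_of_pos hεpos, hlogε, hB_def]
    congr 1; field_simp
  have hBpos : 0 < B := by rw [hB_def]; positivity
  have ha_pos : 0 < a := by rw [ha_exp]; exact Real.exp_pos _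
  have hlog2pos : 0 < Real.log 2 := Real.log_pos one_lt_two
  have hlog2lt : Real.log 2 < 1 := by
    have := Real.log_lt_sub_one_of_pos (by norm_num : (0:ℝ) < 2) (by norm_num)
    linarith
  have hab : a ≤ b := by
    rw [ha_exp, hb_exp]
    have h0 : (0:ℝ) ≤ Real.log 2 / L := by positivity
    exact Real.exp_le_exp.mpr (by linarith)
  have hlog1 : 1 ≤ Real.log L := by
    rw [Real.le_log_iff_exp_le hL0]
    have := Real.exp_one_lt_d9
    linarith
  have hBlb : 2 / L ≤ B := by
    rw [hB_def]
    have h1 : (2:ℝ) ≤ ((n:ℝ)+1) := by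
      have : (1:ℝ) ≤ (n:ℝ) := by exact_mod_cast hn
      linarith
    rw [div_le_div_iff₀ hL0 hL0]
    have h2 : (2:ℝ)*1 ≤ ((n:ℝ)+1) * Real.log L :=
      mul_le_mul h1 hlog1 zero_le_one (by linarith)
    nlinarith [h2, hL0]
  have hb1 : b < 1 := by
    rw [hb_exp, ← Real.exp_zero]
    apply Real.exp_lt_exp.mpr
    have h1 : Real.log 2 / L < 2 / L := by
      rw [div_lt_div_iff₀ hL0 hL0]
      nlinarith
    linarith
  have ha1 : a < 1 := lt_of_le_of_lt hab hb1
  have h1a : 1 - a ≤ B := by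
    have h := Real.add_one_le_exp (-B)
    rw [← ha_exp] at h
    linarith
  have hba : b - a ≤ 2 / L := by
    set w : ℝ := Real.log 2 / L with hw_def
    have hw0 : (0:ℝ) ≤ w := by rw [hw_def]; positivity
    have hw1 : w ≤ 1 / L := by
      rw [hw_def, div_le_div_iff₀ hL0 hL0]
      nlinarith
    have hwL : (1:ℝ) / L ≤ 1 / 3 := by
      apply one_div_le_one_div_of_le
      · norm_num
      · exact hL3
    have h2 : (0:ℝ) < 1 - w := by linarith
    have h3 : (0:ℝ) < Real.exp w := Real.exp_pos _
    have h1 : 1 - w ≤ (Real.exp w)⁻¹ := by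
      have := Real.add_one_le_exp (-w)
      rw [Real.exp_neg] at this
      linarith
    have h4 : (1 - w) * Real.exp w ≤ 1 := by
      have := mul_le_mul_of_nonneg_right h1 h3.le
      rwa [inv_mul_cancel₀ h3.ne'] at this
    have hexp : Real.exp w ≤ 1 / (1 - w) := by
      rw [le_div_iff₀ h2]
      linarith [h4]
    have hsplit : b = a * Real.exp w := by
      rw [ha_exp, hb_exp, ← Real.exp_add, hw_def]
      congr 1; ring
    have hew1 : 1 ≤ Real.exp w := Real.one_le_exp hw0
    -- exp w - 1 ≤ w/(1-w) ≤ 2/L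
    have h5 : Real.exp w - 1 ≤ w / (1 - w) := by
      rw [div_eq_mul_inv]
      have : 1 / (1 - w) - 1 = w * (1 - w)⁻¹ := by field_simp; ring
      linarith [hexp, this]
    have h6 : w / (1 - w) ≤ 2 / L := by
      rw [div_le_div_iff₀ h2 hL0]
      -- w * L ≤ 2 * (1 - w) : w ≤ 1/L so w*L ≤ 1 ; 1-w ≥ 2/3 so RHS ≥ 4/3
      have hwl : w * L ≤ 1 := by
        have := mul_le_mul_of_nonneg_right hw1 hL0.le
        rwa [one_div, inv_mul_cancel₀ hL0.ne'] at this
      nlinarith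
    have heq : b - a = a * (Real.exp w - 1) := by rw [hsplit]; ring
    have h7 : a * (Real.exp w - 1) ≤ Real.exp w - 1 := by
      nlinarith [ha1.le, ha_pos, hew1]
    rw [heq]
    linarith [h7, h5, h6]
  -- the shell
  set s : Set (Fin n → ℂ) :=
    {z : Fin n → ℂ | a ≤ 1 - enormSq z ∧ 1 - enormSq z ≤ b} with hs_def
  have hs_eq : s = enormSq ⁻¹' Set.Icc (1-b) (1-a) := by
    ext z
    simp only [hs_def, Set.mem_setOf_eq, Set.mem_preimage, Set.mem_Icc]
    constructor <;> (rintro ⟨h1, h2⟩; exact ⟨by linarith, by linarith⟩)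
  have hsmeas : MeasurableSet s := by
    rw [hs_eq]; exact measurableSet_Icc.preimage enormSq_cont.measurable
  have hLinv : (0:ℝ) < 1 / L := by positivity
  set y : ℝ := max (1 - b - 1/L) 0 with hy_def
  have hy0 : (0:ℝ) ≤ y := le_max_right _ _
  have hy1a : y ≤ 1 - a := max_le (by linarith) (by linarith)
  have hylt : y < 1 - b := max_lt (by linarith) (by linarith)
  have h1a0 : (0:ℝ) ≤ 1 - a := by linarith
  have hmeas_y : MeasurableSet {z : Fin n → ℂ | enormSq z ≤ y} :=
    measurableSet_le enormSq_cont.measurable measurable_const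
  have hsubsets : {z : Fin n → ℂ | enormSq z ≤ y} ⊆ {z : Fin n → ℂ | enormSq z ≤ 1-a} :=
    fun z hz => le_trans hz hy1a
  have hsub : s ⊆ {z : Fin n → ℂ | enormSq z ≤ 1-a} \ {z : Fin n → ℂ | enormSq z ≤ y} := by
    rintro z ⟨h1, h2⟩
    refine ⟨by simp only [Set.mem_setOf_eq]; linarith, fun hmem => ?_⟩
    simp only [Set.mem_setOf_eq] at hmem
    linarith
  have hνy : nuMeasure n {z : Fin n → ℂ | enormSq z ≤ y} = ENNReal.ofReal (y^n) :=
    nu_ball n hn hy0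
  have hνa : nuMeasure n {z : Fin n → ℂ | enormSq z ≤ 1-a} = ENNReal.ofReal ((1-a)^n) :=
    nu_ball n hn h1a0
  have hν : nuMeasure n s ≤ ENNReal.ofReal ((1-a)^n - y^n) := by
    calc nuMeasure n s
        ≤ nuMeasure n ({z : Fin n → ℂ | enormSq z ≤ 1-a} \ {z : Fin n → ℂ | enormSq z ≤ y}) :=
          measure_mono hsub
      _ = nuMeasure n {z : Fin n → ℂ | enormSq z ≤ 1-a}
          - nuMeasure n {z : Fin n → ℂ | enormSq z ≤ y} :=
          measure_diff hsubsets hmeas_y.nullMeasurableSet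
            (by rw [hνy]; exact ENNReal.ofReal_ne_top)
      _ = ENNReal.ofReal ((1-a)^n) - ENNReal.ofReal (y^n) := by rw [hνa, hνy]
      _ = ENNReal.ofReal ((1-a)^n - y^n) := (ENNReal.ofReal_sub _ (by positivity)).symm
  set T : ℝ := (nuMeasure n s).toReal with hT_def
  have hT0 : 0 ≤ T := ENNReal.toReal_nonneg
  have hsfin : nuMeasure n s < ⊤ := lt_of_le_of_lt hν ENNReal.ofReal_lt_top
  have hTle : T ≤ (1-a)^n - y^n := by
    refine ENNReal.toReal_le_of_le_ofReal ?_ hν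
    have := pow_le_pow_left₀ hy0 hy1a n
    linarith
  have hTB : T ≤ (n:ℝ) * B^(n-1) * (3/L) := by
    have h1 : (1-a)^n - y^n ≤ (n:ℝ) * (1-a)^(n-1) * ((1-a) - y) :=
      pow_sub_pow_le hy0 hy1a hn
    have hylb : 1 - b - 1/L ≤ y := le_max_left _ _
    have h3L : b - a + 1/L ≤ 3/L := by
      have he3 : (2:ℝ)/L + 1/L = 3/L := by ring
      linarith [hba]
    have h2 : (1-a) - y ≤ 3/L := by linarith
    have h3 : (1-a)^(n-1) ≤ B^(n-1) := pow_le_pow_left₀ h1a0 h1a (n-1)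
    have h4 : (0:ℝ) ≤ (1-a) - y := by linarith
    calc T ≤ (1-a)^n - y^n := hTle
      _ ≤ (n:ℝ) * (1-a)^(n-1) * ((1-a) - y) := h1
      _ ≤ (n:ℝ) * B^(n-1) * (3/L) := by
          refine mul_le_mul ?_ h2 h4 ?_
          · exact mul_le_mul_of_nonneg_left h3 (Nat.cast_nonneg n)
          · exact mul_nonneg (Nat.cast_nonneg n) (pow_nonneg hBpos.le _)
  -- epsilon facts
  have hεeq : ε = 2 * (L ^ (n+1 : ℕ))⁻¹ := by
    rw [hε_def]
    congr 1
    rw [← Real.rpow_natCast L (n+1), ← Real.rpow_neg hL0.le]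
    congr 1
    push_cast; ring
  have hLpow9 : (9:ℝ) ≤ L ^ (n+1 : ℕ) := by
    have h1 : (9:ℝ) ≤ L^2 := by
      rw [sq]
      calc (9:ℝ) = 3*3 := by norm_num
        _ ≤ L*L := mul_le_mul hL3 hL3 (by norm_num) hL0.le
    have h2 : L^2 ≤ L^(n+1 : ℕ) := pow_le_pow_right₀ hL1 (by omega)
    exact h1.trans h2
  have hLpowpos : (0:ℝ) < L ^ (n+1 : ℕ) := pow_pos hL0 _
  have hεhalf : ε ≤ 1/2 := by
    rw [hεeq]
    have h1 : (L ^ (n+1:ℕ))⁻¹ ≤ (9:ℝ)⁻¹ := inv_anti₀ (by norm_num) hLpow9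
    linarith
  have hε1 : ε < 1 := by linarith
  -- pointwise bound of integrand
  have hkey : ∀ m : ℕ, ∀ z ∈ s,
      ‖(1 - enormSq z) ^ (((m : ℝ) + 1) * L - n - 1)‖ ≤ 2 * ε^(m+1) := by
    intro m z hz
    obtain ⟨h1, h2⟩ := hz
    have hq0 : (0:ℝ) ≤ 1 - enormSq z := le_trans ha_pos.le h1
    have hm0 : (0:ℝ) ≤ (m:ℝ) := Nat.cast_nonneg m
    have he0 : (0:ℝ) ≤ ((m:ℝ)+1) * L - n - 1 := by
      have hmm : L ≤ ((m:ℝ)+1)*L := le_mul_of_one_le_left hL0.le (by linarith)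
      linarith [hLn]
    rw [Real.norm_eq_abs, abs_of_nonneg (Real.rpow_nonneg hq0 _)]
    have hqb : (1 - enormSq z) ^ (((m : ℝ) + 1) * L - n - 1)
        ≤ b ^ (((m : ℝ) + 1) * L - n - 1) := Real.rpow_le_rpow hq0 h2 he0
    have hbe : b ^ (((m : ℝ) + 1) * L - n - 1)
        = ε ^ ((m:ℝ)+1) * ε ^ (-((n:ℝ)+1)/L) := by
      rw [hb_def, ← Real.rpow_mul hεpos.le, ← Real.rpow_add hεpos]
      congr 1
      field_simp
      ring
    have hεexp2 : ε ^ (-((n:ℝ)+1)/L) ≤ 2 := by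
      rw [Real.rpow_def_of_pos hεpos, hlogε]
      nth_rewrite 2 [show (2:ℝ) = Real.exp (Real.log 2) from (Real.exp_log two_pos).symm]
      apply Real.exp_le_exp.mpr
      have expand : (Real.log 2 - ((n:ℝ)+1)*Real.log L) * (-((n:ℝ)+1)/L)
          = ((n:ℝ)+1)^2 * (Real.log L / L) - Real.log 2 * (((n:ℝ)+1)/L) := by
        field_simp
        ring
      rw [expand]
      have h5 : (0:ℝ) ≤ Real.log 2 * (((n:ℝ)+1)/L) := by positivity
      linarith [hlog]
    have hεm : ε ^ ((m:ℝ)+1) = ε ^ (m+1 : ℕ) := by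
      rw [← Real.rpow_natCast ε (m+1)]
      congr 1
      push_cast; ring
    calc (1 - enormSq z) ^ (((m : ℝ) + 1) * L - n - 1)
        ≤ b ^ (((m : ℝ) + 1) * L - n - 1) := hqb
      _ = ε ^ ((m:ℝ)+1) * ε ^ (-((n:ℝ)+1)/L) := hbe
      _ ≤ ε ^ ((m:ℝ)+1) * 2 :=
          mul_le_mul_of_nonneg_left hεexp2 (Real.rpow_nonneg hεpos.le _)
      _ = 2 * ε ^ (m+1 : ℕ) := by rw [hεm]; ring
  -- integral bounds
  have hInt : ∀ m : ℕ,
      (∫ z in s, (1 - enormSq z) ^ (((m : ℝ) + 1) * L - n - 1) ∂(nuMeasure n))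
        ≤ 2 * ε^(m+1) * T := by
    intro m
    have h := norm_setIntegral_le_of_norm_le_const hsfin (hkey m)
    calc (∫ z in s, (1 - enormSq z) ^ (((m : ℝ) + 1) * L - n - 1) ∂(nuMeasure n))
        ≤ ‖∫ z in s, (1 - enormSq z) ^ (((m : ℝ) + 1) * L - n - 1) ∂(nuMeasure n)‖ :=
          le_abs_self _
      _ ≤ 2 * ε^(m+1) * T := h
  have hIpos : ∀ m : ℕ,
      0 ≤ ∫ z in s, (1 - enormSq z) ^ (((m : ℝ) + 1) * L - n - 1) ∂(nuMeasure n) :=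
    fun m => setIntegral_nonneg hsmeas
      (fun z hz => Real.rpow_nonneg (le_trans ha_pos.le hz.1) _)
  set g : ℕ → ℝ := fun m => (2*T*ε) * ε^m with hg_def
  have hterm : ∀ m : ℕ,
      (1 / ((m : ℝ) + 1) ^ 2) *
        (∫ z in s, (1 - enormSq z) ^ (((m : ℝ) + 1) * L - n - 1) ∂(nuMeasure n)) ≤ g m := by
    intro m
    have hm0 : (0:ℝ) ≤ (m:ℝ) := Nat.cast_nonneg m
    have h1 : (1 / ((m:ℝ)+1)^2) ≤ 1 := by
      rw [div_le_one (by positivity)]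
      exact one_le_pow₀ (le_add_of_nonneg_left hm0)
    calc (1 / ((m : ℝ) + 1) ^ 2) *
          (∫ z in s, (1 - enormSq z) ^ (((m : ℝ) + 1) * L - n - 1) ∂(nuMeasure n))
        ≤ 1 * (∫ z in s, (1 - enormSq z) ^ (((m : ℝ) + 1) * L - n - 1) ∂(nuMeasure n)) :=
          mul_le_mul_of_nonneg_right h1 (hIpos m)
      _ = ∫ z in s, (1 - enormSq z) ^ (((m : ℝ) + 1) * L - n - 1) ∂(nuMeasure n) := one_mul _
      _ ≤ 2 * ε^(m+1) * T := hInt m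
      _ = g m := by rw [hg_def]; simp only []; rw [pow_succ]; ring
  have htermpos : ∀ m : ℕ,
      0 ≤ (1 / ((m : ℝ) + 1) ^ 2) *
        (∫ z in s, (1 - enormSq z) ^ (((m : ℝ) + 1) * L - n - 1) ∂(nuMeasure n)) :=
    fun m => mul_nonneg (by positivity) (hIpos m)
  have hgsum : Summable g := (summable_geometric_of_lt_one hεpos.le hε1).mul_left _
  have hfsum : Summable (fun m : ℕ =>
      (1 / ((m : ℝ) + 1) ^ 2) *
        (∫ z in s, (1 - enormSq z) ^ (((m : ℝ) + 1) * L - n - 1) ∂(nuMeasure n))) :=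
    Summable.of_nonneg_of_le htermpos hterm hgsum
  have hmain := Summable.tsum_le_tsum hterm hfsum hgsum
  refine le_trans hmain ?_
  have htsumg : ∑' m : ℕ, g m = (2*T*ε) * (1-ε)⁻¹ := by
    rw [hg_def, tsum_mul_left, tsum_geometric_of_lt_one hεpos.le hε1]
  rw [htsumg]
  have hinv2 : (1-ε)⁻¹ ≤ 2 := by
    have h1 : (1:ℝ)/2 ≤ 1-ε := by linarith
    calc (1-ε)⁻¹ ≤ ((1:ℝ)/2)⁻¹ := inv_anti₀ (by norm_num) h1
      _ = 2 := by norm_num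
  calc (2*T*ε) * (1-ε)⁻¹ ≤ (2*T*ε) * 2 := by
        refine mul_le_mul_of_nonneg_left hinv2 (by positivity)
    _ = 4 * (T * ε) := by ring
    _ ≤ 4 * (((n:ℝ) * B^(n-1) * (3/L)) * ε) :=
        mul_le_mul_of_nonneg_left (mul_le_mul_of_nonneg_right hTB hεpos.le) (by norm_num)
    _ = 4 * ((n:ℝ) * B^(n-1) * (3/L)) * ε := by ring
    _ = 24 * (n:ℝ) * ((n:ℝ)+1)^(n-1) * Real.log L ^ (n-1) / L ^ (2*n+1) := by
        rw [hεeq, hB_def, div_pow, mul_pow]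
        have hpow : L^(2*n+1) = L^(n-1) * L^(n+1 : ℕ) * L := by
          rw [← pow_add, ← pow_succ]
          congr 1
          omega
        rw [hpow]
        field_simp
        ring
end
end

section
/- Let n ≥ 2 be an integer and for L > 0 set r_L = 1 − L^{−(n+1)/L}. There exist C > 0 and L₀ such that for all real L ≥ L₀: Σ_{m=1}^∞ (1/m²)·Σ_{j=1}^{n−1} (Γ(mL−n)/(Γ(n−j)·Γ(mL−n+j)))·(1−r_L)^{mL−n+j−1}·r_L^{n−j} ≤ C·(log L)^{n−1}/L^{2n+1}. -/
open MeasureTheory Finset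

lemma gamma_ratio_aux (x : ℝ) (hx : 0 < x) (j : ℕ) :
    x ^ j * Real.Gamma x ≤ Real.Gamma (x + j) := by
  induction j with
  | zero => simp
  | succ k ih =>
    have hxk : (0:ℝ) < x + k := by positivity
    have h1 : Real.Gamma (x + (k + 1 : ℕ)) = (x + k) * Real.Gamma (x + k) := by
      have h2 : (x + (k + 1 : ℕ) : ℝ) = (x + k) + 1 := by push_cast; ring
      rw [h2, Real.Gamma_add_one (ne_of_gt hxk)]
    rw [h1]
    calc x ^ (k + 1) * Real.Gamma x = x * (x ^ k * Real.Gamma x) := by ring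
      _ ≤ x * Real.Gamma (x + k) := mul_le_mul_of_nonneg_left ih hx.le
      _ ≤ (x + k) * Real.Gamma (x + k) :=
          mul_le_mul_of_nonneg_right (by linarith [Nat.cast_nonneg (α := ℝ) k])
            (Real.Gamma_pos_of_pos hxk).le

lemma one_le_gamma_nat (k : ℕ) (hk : 1 ≤ k) : 1 ≤ Real.Gamma k := by
  obtain ⟨l, rfl⟩ : ∃ l, k = l + 1 := ⟨k - 1, by omega⟩
  rw [show ((l + 1 : ℕ) : ℝ) = (l : ℝ) + 1 by push_cast; ring,
    Real.Gamma_nat_eq_factorial]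
  exact_mod_cast Nat.one_le_iff_ne_zero.mpr (Nat.factorial_ne_zero l)

set_option maxHeartbeats 1000000 in
theorem stmt9 (n : ℕ) (hn : 2 ≤ n) :
    ∃ C > (0:ℝ), ∃ L₀ : ℝ, ∀ L : ℝ, L₀ ≤ L →
      (∑' m : ℕ, (1 / ((m : ℝ) + 1) ^ 2) *
        ∑ j ∈ Finset.Icc 1 (n - 1),
          (Real.Gamma (((m : ℝ) + 1) * L - n) /
              (Real.Gamma ((n : ℝ) - j) * Real.Gamma (((m : ℝ) + 1) * L - n + j)))
            * (1 - (1 - L ^ (-((n : ℝ) + 1) / L))) ^ (((m : ℝ) + 1) * L - n + j - 1)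
            * (1 - L ^ (-((n : ℝ) + 1) / L)) ^ (n - j))
        ≤ C * (Real.log L) ^ (n - 1) / L ^ (2 * n + 1) := by
  have hn0 : (0:ℝ) < n := by
    have : 0 < n := by omega
    exact_mod_cast this
  have hn2 : (2:ℝ) ≤ n := by exact_mod_cast hn
  refine ⟨2 ^ (n + 2) * n * ((n:ℝ) + 1) ^ n,
    mul_pos (mul_pos (by positivity) hn0) (by positivity),
    16 * ((n:ℝ) + 1) ^ 4, fun L hL => ?_⟩
  -- basic facts about L
  have hL16 : 16 * ((n:ℝ) + 1) ^ 4 ≤ L := hL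
  have hpow4 : ((n:ℝ) + 1) ≤ ((n:ℝ) + 1) ^ 4 := le_self_pow₀ (by linarith) (by norm_num)
  have hL3 : (3:ℝ) ≤ L := by nlinarith [hpow4, hn2]
  have hL0 : (0:ℝ) < L := by linarith
  have hL1 : (1:ℝ) ≤ L := by linarith
  have hL2n : 2 * (n:ℝ) + 2 ≤ L := by nlinarith [hpow4, hn2]
  have hlog1 : 1 ≤ Real.log L := by
    rw [Real.le_log_iff_exp_le hL0]
    linarith [Real.exp_one_lt_d9]
  have hlogpos : 0 < Real.log L := by linarith
  have hsqrt : 4 * ((n:ℝ) + 1) ^ 2 ≤ Real.sqrt L := by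
    have h1 : Real.sqrt (16 * ((n:ℝ) + 1) ^ 4) = 4 * ((n:ℝ) + 1) ^ 2 := by
      rw [show (16 * ((n:ℝ) + 1) ^ 4) = (4 * ((n:ℝ) + 1) ^ 2) ^ 2 by ring,
        Real.sqrt_sq (by positivity)]
    rw [← h1]
    exact Real.sqrt_le_sqrt hL16
  have hlogsqrt : Real.log L ≤ 2 * Real.sqrt L := by
    have h1 : Real.log (Real.sqrt L) ≤ Real.sqrt L - 1 :=
      Real.log_le_sub_one_of_pos (Real.sqrt_pos.mpr hL0)
    have h2 : Real.log (Real.sqrt L) = Real.log L / 2 := Real.log_sqrt hL0.le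
    linarith [Real.sqrt_nonneg L]
  have hsq : Real.sqrt L * Real.sqrt L = L := Real.mul_self_sqrt hL0.le
  have hkey : ((n:ℝ) + 1) * n * Real.log L ≤ L * Real.log 2 := by
    have hlog2 : (0.5:ℝ) ≤ Real.log 2 := by linarith [Real.log_two_gt_d9]
    nlinarith [Real.sqrt_nonneg L, hsqrt, hlogsqrt, hn2, hsq, hlogpos]
  have hexp2 : L ^ (((n:ℝ) + 1) * n / L) ≤ 2 := by
    rw [Real.rpow_def_of_pos hL0]
    have h1 : Real.log L * (((n:ℝ) + 1) * n / L) ≤ Real.log 2 := by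
      rw [show Real.log L * (((n:ℝ) + 1) * n / L)
          = (((n:ℝ) + 1) * n * Real.log L) / L by ring, div_le_iff₀ hL0]
      nlinarith [hkey]
    calc Real.exp (Real.log L * (((n:ℝ) + 1) * n / L))
        ≤ Real.exp (Real.log 2) := Real.exp_le_exp.mpr h1
      _ = 2 := Real.exp_log two_pos
  -- facts about q = L ^ (-(n+1)/L)
  set q : ℝ := L ^ (-((n : ℝ) + 1) / L) with hq
  have ha : -((n:ℝ) + 1) / L ≤ 0 := by
    apply div_nonpos_of_nonpos_of_nonneg <;> [linarith; linarith]
  have hq0 : 0 < q := Real.rpow_pos_of_pos hL0 _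
  have hq1 : q ≤ 1 := Real.rpow_le_one_of_one_le_of_nonpos hL1 ha
  have hr0 : (0:ℝ) ≤ 1 - q := by linarith
  have ht : 1 - q ≤ ((n:ℝ) + 1) * Real.log L / L := by
    have hqexp : q = Real.exp (Real.log L * (-((n:ℝ) + 1) / L)) := by
      rw [hq, Real.rpow_def_of_pos hL0]
    have h := Real.add_one_le_exp (Real.log L * (-((n:ℝ) + 1) / L))
    rw [← hqexp] at h
    have h2 : Real.log L * (-((n:ℝ) + 1) / L) = -(((n:ℝ) + 1) * Real.log L / L) := by
      ring
    rw [h2] at h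
    linarith
  have ht0 : (0:ℝ) ≤ ((n:ℝ) + 1) * Real.log L / L := by positivity
  -- ρ
  set ρ : ℝ := (L ^ (n + 1))⁻¹ with hρ
  have hρ0 : (0:ℝ) ≤ ρ := by positivity
  have hρhalf : ρ ≤ 1 / 2 := by
    have h1 : (2:ℝ) ≤ L ^ (n + 1) := le_trans (by linarith) (le_self_pow₀ hL1 (Nat.succ_ne_zero n))
    rw [hρ]
    rw [show (1:ℝ)/2 = (2:ℝ)⁻¹ by norm_num]
    exact inv_anti₀ (by norm_num) h1
  -- the per-j constant
  set M : ℝ := 2 ^ (n + 1) * ((n:ℝ) + 1) ^ n * Real.log L ^ (n - 1) / L ^ n with hM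
  have hM0 : 0 ≤ M := by positivity
  -- main termwise bound
  have hjbound : ∀ m : ℕ, ∀ j ∈ Finset.Icc 1 (n - 1),
      (Real.Gamma (((m : ℝ) + 1) * L - n) /
          (Real.Gamma ((n : ℝ) - j) * Real.Gamma (((m : ℝ) + 1) * L - n + j)))
        * (1 - (1 - q)) ^ (((m : ℝ) + 1) * L - n + j - 1)
        * (1 - q) ^ (n - j) ≤ M * ρ ^ (m + 1) := by
    intro m j hj
    rw [Finset.mem_Icc] at hj
    obtain ⟨hj1, hj2⟩ := hj
    have hjn : j ≤ n := by omega
    have hj1' : (1:ℝ) ≤ j := by exact_mod_cast hj1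
    have hjr : (j:ℝ) ≤ (n:ℝ) - 1 := by
      have : (j:ℝ) ≤ ((n - 1 : ℕ) : ℝ) := by exact_mod_cast hj2
      rwa [Nat.cast_sub (by omega), Nat.cast_one] at this
    set x : ℝ := ((m : ℝ) + 1) * L - n with hx
    have hm1 : (1:ℝ) ≤ (m:ℝ) + 1 := by linarith [Nat.cast_nonneg (α := ℝ) m]
    have hLm : L ≤ ((m:ℝ) + 1) * L := le_mul_of_one_le_left hL0.le hm1
    have hxL : L / 2 ≤ x := by rw [hx]; linarith
    have hx0 : 0 < x := by linarith
    have hΓx : 0 < Real.Gamma x := Real.Gamma_pos_of_pos hx0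
    have hxj0 : 0 < x + (j:ℝ) := by positivity
    have hΓxj : 0 < Real.Gamma (x + j) := Real.Gamma_pos_of_pos hxj0
    have hΓnj : 1 ≤ Real.Gamma ((n:ℝ) - j) := by
      have h1 : (n:ℝ) - j = ((n - j : ℕ) : ℝ) := by
        rw [Nat.cast_sub hjn]
      rw [h1]
      exact one_le_gamma_nat _ (by omega)
    -- A bound
    have hA : Real.Gamma x / (Real.Gamma ((n:ℝ) - j) * Real.Gamma (x + j)) ≤ (2 / L) ^ j := by
      have h1 : x ^ j * Real.Gamma x ≤ Real.Gamma (x + j) := gamma_ratio_aux x hx0 j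
      have h2 : x ^ j * Real.Gamma x ≤ Real.Gamma ((n:ℝ) - j) * Real.Gamma (x + j) := by
        calc x ^ j * Real.Gamma x ≤ Real.Gamma (x + j) := h1
          _ = 1 * Real.Gamma (x + j) := (one_mul _).symm
          _ ≤ Real.Gamma ((n:ℝ) - j) * Real.Gamma (x + j) :=
              mul_le_mul_of_nonneg_right hΓnj hΓxj.le
      have hpos : 0 < x ^ j * Real.Gamma x := by positivity
      calc Real.Gamma x / (Real.Gamma ((n:ℝ) - j) * Real.Gamma (x + j))
          ≤ Real.Gamma x / (x ^ j * Real.Gamma x) :=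
            div_le_div_of_nonneg_left hΓx.le hpos h2
        _ = (x ^ j)⁻¹ := by
            field_simp
        _ ≤ (2 / L) ^ j := by
            have h3 : (L / 2) ^ j ≤ x ^ j := pow_le_pow_left₀ (by positivity) hxL j
            have h4 : ((L / 2) ^ j)⁻¹ = (2 / L) ^ j := by
              rw [← inv_pow, inv_div]
            rw [← h4]
            exact inv_anti₀ (by positivity) h3
    -- B bound
    have hB : q ^ (x + (j:ℝ) - 1) ≤ 2 * ρ ^ (m + 1) := by
      have hE : x ≤ x + (j:ℝ) - 1 := by linarith
      have h1 : q ^ (x + (j:ℝ) - 1) ≤ q ^ x :=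
        Real.rpow_le_rpow_of_exponent_ge hq0 hq1 hE
      have h2 : q ^ x = L ^ ((-((n:ℝ) + 1) / L) * x) :=
        (Real.rpow_mul hL0.le _ x).symm
      have h3 : (-((n:ℝ) + 1) / L) * x
          = (-(((n:ℝ) + 1) * ((m:ℝ) + 1))) + ((n:ℝ) + 1) * n / L := by
        rw [hx]; field_simp; ring
      have h5 : L ^ (-(((n:ℝ) + 1) * ((m:ℝ) + 1))) = ρ ^ (m + 1) := by
        rw [show (-(((n:ℝ) + 1) * ((m:ℝ) + 1))) = -(((n + 1) * (m + 1) : ℕ) : ℝ) by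
            push_cast; ring,
          Real.rpow_neg hL0.le, Real.rpow_natCast, hρ, pow_mul, inv_pow]
      calc q ^ (x + (j:ℝ) - 1) ≤ q ^ x := h1
        _ = ρ ^ (m + 1) * L ^ (((n:ℝ) + 1) * n / L) := by
            rw [h2, h3, Real.rpow_add hL0, h5]
        _ ≤ ρ ^ (m + 1) * 2 := mul_le_mul_of_nonneg_left hexp2 (by positivity)
        _ = 2 * ρ ^ (m + 1) := mul_comm _ _
    -- D bound
    have hD : (1 - q) ^ (n - j) ≤ (((n:ℝ) + 1) * Real.log L / L) ^ (n - j) :=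
      pow_le_pow_left₀ hr0 ht (n - j)
    -- combine
    have hB0 : (0:ℝ) ≤ q ^ (x + (j:ℝ) - 1) := (Real.rpow_pos_of_pos hq0 _).le
    have hcomb : (2 / L) ^ j * (2 * ρ ^ (m + 1)) * (((n:ℝ) + 1) * Real.log L / L) ^ (n - j)
        ≤ M * ρ ^ (m + 1) := by
      have hjadd : j + (n - j) = n := by omega
      have e1 : (2 / L) ^ j * (((n:ℝ) + 1) * Real.log L / L) ^ (n - j)
          = (2 ^ j * (((n:ℝ) + 1) ^ (n - j) * Real.log L ^ (n - j))) / L ^ n := by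
        rw [div_pow, div_pow, mul_pow, ← hjadd, pow_add]
        field_simp
        rw [Nat.add_sub_cancel_left]
      have e2 : (2:ℝ) ^ j * (((n:ℝ) + 1) ^ (n - j) * Real.log L ^ (n - j))
          ≤ 2 ^ n * (((n:ℝ) + 1) ^ n * Real.log L ^ (n - 1)) := by
        have b1 : (2:ℝ) ^ j ≤ 2 ^ n := pow_le_pow_right₀ (by norm_num) hjn
        have b2 : ((n:ℝ) + 1) ^ (n - j) ≤ ((n:ℝ) + 1) ^ n :=
          pow_le_pow_right₀ (by linarith) (by omega)
        have b3 : Real.log L ^ (n - j) ≤ Real.log L ^ (n - 1) :=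
          pow_le_pow_right₀ hlog1 (by omega)
        have c1 : (0:ℝ) ≤ 2 ^ j := by positivity
        have c2 : (0:ℝ) ≤ ((n:ℝ) + 1) ^ (n - j) := by positivity
        have c3 : (0:ℝ) ≤ Real.log L ^ (n - j) := by positivity
        calc (2:ℝ) ^ j * (((n:ℝ) + 1) ^ (n - j) * Real.log L ^ (n - j))
            ≤ 2 ^ n * (((n:ℝ) + 1) ^ (n - j) * Real.log L ^ (n - j)) := by
              apply mul_le_mul_of_nonneg_right b1 (by positivity)
          _ ≤ 2 ^ n * (((n:ℝ) + 1) ^ n * Real.log L ^ (n - 1)) := by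
              apply mul_le_mul_of_nonneg_left _ (by positivity)
              exact mul_le_mul b2 b3 c3 (by positivity)
      calc (2 / L) ^ j * (2 * ρ ^ (m + 1)) * (((n:ℝ) + 1) * Real.log L / L) ^ (n - j)
          = 2 * ρ ^ (m + 1) * ((2 / L) ^ j * (((n:ℝ) + 1) * Real.log L / L) ^ (n - j)) := by
            ring
        _ ≤ 2 * ρ ^ (m + 1) *
            ((2 ^ n * (((n:ℝ) + 1) ^ n * Real.log L ^ (n - 1))) / L ^ n) := by
            apply mul_le_mul_of_nonneg_left _ (by positivity)
            rw [e1]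
            exact (div_le_div_iff_of_pos_right (by positivity)).mpr e2
        _ = M * ρ ^ (m + 1) := by
            rw [hM, pow_succ]
            ring
    calc Real.Gamma x / (Real.Gamma ((n:ℝ) - j) * Real.Gamma (x + j))
          * (1 - (1 - q)) ^ (x + (j:ℝ) - 1) * (1 - q) ^ (n - j)
        = Real.Gamma x / (Real.Gamma ((n:ℝ) - j) * Real.Gamma (x + j))
          * q ^ (x + (j:ℝ) - 1) * (1 - q) ^ (n - j) := by rw [sub_sub_cancel]
      _ ≤ (2 / L) ^ j * (2 * ρ ^ (m + 1)) * (((n:ℝ) + 1) * Real.log L / L) ^ (n - j) := by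
          apply mul_le_mul _ hD (pow_nonneg hr0 _) (by positivity)
          exact mul_le_mul hA hB hB0 (by positivity)
      _ ≤ M * ρ ^ (m + 1) := hcomb
  -- nonnegativity of each summand
  have hSnonneg : ∀ m : ℕ, 0 ≤
      ∑ j ∈ Finset.Icc 1 (n - 1),
        (Real.Gamma (((m : ℝ) + 1) * L - n) /
            (Real.Gamma ((n : ℝ) - j) * Real.Gamma (((m : ℝ) + 1) * L - n + j)))
          * (1 - (1 - q)) ^ (((m : ℝ) + 1) * L - n + j - 1)
          * (1 - q) ^ (n - j) := by
    intro m
    apply Finset.sum_nonneg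
    intro j hj
    rw [Finset.mem_Icc] at hj
    have hm1 : (1:ℝ) ≤ (m:ℝ) + 1 := by linarith [Nat.cast_nonneg (α := ℝ) m]
    have hLm : L ≤ ((m:ℝ) + 1) * L := le_mul_of_one_le_left hL0.le hm1
    have hx0 : (0:ℝ) ≤ ((m:ℝ) + 1) * L - n := by linarith
    have hj0 : (0:ℝ) ≤ (j:ℝ) := Nat.cast_nonneg j
    have hjr : (j:ℝ) ≤ (n:ℝ) - 1 := by
      have : (j:ℝ) ≤ ((n - 1 : ℕ) : ℝ) := by exact_mod_cast hj.2
      rwa [Nat.cast_sub (by omega), Nat.cast_one] at this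
    apply mul_nonneg (mul_nonneg _ _) (pow_nonneg hr0 _)
    · exact div_nonneg (Real.Gamma_nonneg_of_nonneg hx0)
        (mul_nonneg (Real.Gamma_nonneg_of_nonneg (by linarith))
          (Real.Gamma_nonneg_of_nonneg (by linarith)))
    · exact Real.rpow_nonneg (by linarith) _
  have hfnonneg : ∀ m : ℕ, 0 ≤ (1 / ((m : ℝ) + 1) ^ 2) *
      ∑ j ∈ Finset.Icc 1 (n - 1),
        (Real.Gamma (((m : ℝ) + 1) * L - n) /
            (Real.Gamma ((n : ℝ) - j) * Real.Gamma (((m : ℝ) + 1) * L - n + j)))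
          * (1 - (1 - q)) ^ (((m : ℝ) + 1) * L - n + j - 1)
          * (1 - q) ^ (n - j) :=
    fun m => mul_nonneg (by positivity) (hSnonneg m)
  -- per-m bound by a geometric series
  have hFbound : ∀ m : ℕ, (1 / ((m : ℝ) + 1) ^ 2) *
      (∑ j ∈ Finset.Icc 1 (n - 1),
        (Real.Gamma (((m : ℝ) + 1) * L - n) /
            (Real.Gamma ((n : ℝ) - j) * Real.Gamma (((m : ℝ) + 1) * L - n + j)))
          * (1 - (1 - q)) ^ (((m : ℝ) + 1) * L - n + j - 1)
          * (1 - q) ^ (n - j))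
      ≤ ((n:ℝ) * M * ρ) * (1 / 2) ^ m := by
    intro m
    have hcard : (Finset.Icc 1 (n - 1)).card = n - 1 := by
      rw [Nat.card_Icc]; omega
    have hS : (∑ j ∈ Finset.Icc 1 (n - 1),
        (Real.Gamma (((m : ℝ) + 1) * L - n) /
            (Real.Gamma ((n : ℝ) - j) * Real.Gamma (((m : ℝ) + 1) * L - n + j)))
          * (1 - (1 - q)) ^ (((m : ℝ) + 1) * L - n + j - 1)
          * (1 - q) ^ (n - j))
        ≤ ((n - 1 : ℕ) : ℝ) * (M * ρ ^ (m + 1)) := by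
      calc (∑ j ∈ Finset.Icc 1 (n - 1),
            (Real.Gamma (((m : ℝ) + 1) * L - n) /
                (Real.Gamma ((n : ℝ) - j) * Real.Gamma (((m : ℝ) + 1) * L - n + j)))
              * (1 - (1 - q)) ^ (((m : ℝ) + 1) * L - n + j - 1)
              * (1 - q) ^ (n - j))
          ≤ ∑ _j ∈ Finset.Icc 1 (n - 1), M * ρ ^ (m + 1) :=
            Finset.sum_le_sum (hjbound m)
        _ = ((n - 1 : ℕ) : ℝ) * (M * ρ ^ (m + 1)) := by
            rw [Finset.sum_const, hcard, nsmul_eq_mul]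
    have hSnn : (0:ℝ) ≤ ∑ j ∈ Finset.Icc 1 (n - 1),
        (Real.Gamma (((m : ℝ) + 1) * L - n) /
            (Real.Gamma ((n : ℝ) - j) * Real.Gamma (((m : ℝ) + 1) * L - n + j)))
          * (1 - (1 - q)) ^ (((m : ℝ) + 1) * L - n + j - 1)
          * (1 - q) ^ (n - j) := hSnonneg m
    have h1 : 1 / ((m:ℝ) + 1) ^ 2 ≤ 1 := by
      rw [div_le_one (by positivity)]
      have hm1 : (1:ℝ) ≤ (m:ℝ) + 1 := by linarith [Nat.cast_nonneg (α := ℝ) m]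
      calc (1:ℝ) = 1 ^ 2 := by norm_num
        _ ≤ ((m:ℝ) + 1) ^ 2 := pow_le_pow_left₀ zero_le_one hm1 2
    have hnMρ : (0:ℝ) ≤ (n:ℝ) * M * ρ :=
      mul_nonneg (mul_nonneg (Nat.cast_nonneg n) hM0) hρ0
    calc (1 / ((m : ℝ) + 1) ^ 2) *
        (∑ j ∈ Finset.Icc 1 (n - 1),
          (Real.Gamma (((m : ℝ) + 1) * L - n) /
              (Real.Gamma ((n : ℝ) - j) * Real.Gamma (((m : ℝ) + 1) * L - n + j)))
            * (1 - (1 - q)) ^ (((m : ℝ) + 1) * L - n + j - 1)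
            * (1 - q) ^ (n - j))
        ≤ 1 * (((n - 1 : ℕ) : ℝ) * (M * ρ ^ (m + 1))) := by
          apply mul_le_mul h1 hS hSnn zero_le_one
      _ = ((n - 1 : ℕ) : ℝ) * (M * ρ ^ (m + 1)) := one_mul _
      _ ≤ (n:ℝ) * (M * ρ ^ (m + 1)) := by
          apply mul_le_mul_of_nonneg_right _ (mul_nonneg hM0 (pow_nonneg hρ0 _))
          exact_mod_cast Nat.sub_le n 1
      _ = ((n:ℝ) * M * ρ) * ρ ^ m := by rw [pow_succ]; ring
      _ ≤ ((n:ℝ) * M * ρ) * (1 / 2) ^ m :=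
          mul_le_mul_of_nonneg_left (pow_le_pow_left₀ hρ0 hρhalf m) hnMρ
  have hg : Summable (fun m : ℕ => ((n:ℝ) * M * ρ) * (1 / 2) ^ m) :=
    summable_geometric_two.mul_left _
  have hF : Summable (fun m : ℕ => (1 / ((m : ℝ) + 1) ^ 2) *
      ∑ j ∈ Finset.Icc 1 (n - 1),
        (Real.Gamma (((m : ℝ) + 1) * L - n) /
            (Real.Gamma ((n : ℝ) - j) * Real.Gamma (((m : ℝ) + 1) * L - n + j)))
          * (1 - (1 - q)) ^ (((m : ℝ) + 1) * L - n + j - 1)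
          * (1 - q) ^ (n - j)) :=
    Summable.of_nonneg_of_le hfnonneg hFbound hg
  have hpowL : L ^ (2 * n + 1) = L ^ n * L ^ (n + 1) := by
    rw [← pow_add]
    congr 1
    omega
  calc (∑' m : ℕ, (1 / ((m : ℝ) + 1) ^ 2) *
        ∑ j ∈ Finset.Icc 1 (n - 1),
          (Real.Gamma (((m : ℝ) + 1) * L - n) /
              (Real.Gamma ((n : ℝ) - j) * Real.Gamma (((m : ℝ) + 1) * L - n + j)))
            * (1 - (1 - q)) ^ (((m : ℝ) + 1) * L - n + j - 1)
            * (1 - q) ^ (n - j))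
      ≤ ∑' m : ℕ, ((n:ℝ) * M * ρ) * (1 / 2) ^ m := Summable.tsum_le_tsum hFbound hF hg
    _ = ((n:ℝ) * M * ρ) * 2 := by rw [tsum_mul_left, tsum_geometric_two]
    _ = 2 ^ (n + 2) * n * ((n:ℝ) + 1) ^ n * Real.log L ^ (n - 1) / L ^ (2 * n + 1) := by
        rw [hM, hρ, hpowL]
        have hLn : (0:ℝ) < L ^ n := by positivity
        have hLn1 : (0:ℝ) < L ^ (n + 1) := by positivity
        field_simp
        ring
end

section
/- For every integer n ≥ 1 and all reals ε > 0 and δ > 0, there exist C > 0 and L₀ such that for every real L ≥ L₀ and every integer m with m > C·δ·L: m^{n+L/2} ≤ C·e^{ε·m}·Γ(L)^{1/2}. -/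
theorem stmt10 (n : ℕ) (hn : 1 ≤ n) (ε δ : ℝ) (hε : 0 < ε) (hδ : 0 < δ) :
    ∃ C > (0:ℝ), ∃ L₀ : ℝ, ∀ L : ℝ, L₀ ≤ L → ∀ m : ℕ, C * δ * L < m →
      (m : ℝ) ^ ((n : ℝ) + L / 2) ≤ C * Real.exp (ε * m) * Real.Gamma L ^ ((1 : ℝ) / 2) := by
  set e1 : ℝ := Real.exp 1 with he1
  have he1pos : 0 < e1 := Real.exp_pos 1
  set C : ℝ := max ((1 + 4 * e1 / ε ^ 2) / δ) (((Nat.factorial (n+1)) : ℝ) * (2 / ε) ^ (n+1) + 1) with hC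
  have hCpos : 0 < C := by
    have : (0:ℝ) < (1 + 4 * e1 / ε ^ 2) / δ := by positivity
    exact lt_max_of_lt_left this
  refine ⟨C, hCpos, 3, fun L hL m hm => ?_⟩
  have hCδ : 1 + 4 * e1 / ε ^ 2 ≤ C * δ := by
    have h1 : (1 + 4 * e1 / ε ^ 2) / δ ≤ C := le_max_left _ _
    calc 1 + 4 * e1 / ε ^ 2 = (1 + 4 * e1 / ε ^ 2) / δ * δ := by field_simp
      _ ≤ C * δ := by gcongr
  have hCδ1 : 1 ≤ C * δ := by nlinarith [he1pos.le, sq_nonneg ε, div_nonneg (by positivity : (0:ℝ) ≤ 4 * e1) (by positivity : (0:ℝ) ≤ ε^2)]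
  have hL0 : (0:ℝ) < L := by linarith
  have hk3 : 3 ≤ ⌊L⌋₊ := Nat.le_floor (by exact_mod_cast hL)
  have hkL : (⌊L⌋₊:ℝ) ≤ L := Nat.floor_le hL0.le
  have hLk : L < ⌊L⌋₊ + 1 := Nat.lt_floor_add_one L
  obtain ⟨j, hkj⟩ : ∃ j, ⌊L⌋₊ = j + 1 := ⟨⌊L⌋₊ - 1, by omega⟩
  rw [hkj] at hk3 hkL hLk
  push_cast at hkL hLk
  have hj2 : 2 ≤ j := by omega
  have hjpos : (0:ℝ) < j := by exact_mod_cast (by omega : 0 < j)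
  have hj2' : (2:ℝ) ≤ j := by exact_mod_cast hj2
  -- m is large
  have hmL : C * δ * L < m := hm
  have hm3 : (3:ℝ) ≤ (m:ℝ) := by nlinarith
  have hm1 : (1:ℝ) ≤ (m:ℝ) := by linarith
  have hmpos : (0:ℝ) < m := by linarith
  set t : ℝ := (m:ℝ) / j with ht
  have htj : t * j = m := div_mul_cancel₀ _ (ne_of_gt hjpos)
  have htCδ : C * δ < t := by
    have hjL : (j:ℝ) ≤ L := by linarith
    rw [lt_div_iff₀ hjpos]
    calc C * δ * j ≤ C * δ * L := by
          have := mul_pos hCpos hδ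
          nlinarith
      _ < m := hm
  have ht4 : 4 * e1 / ε ^ 2 ≤ t := by linarith
  have htpos : 0 < t := lt_of_lt_of_le (by positivity) ht4
  -- key exponential bound: e1 * t ≤ exp (ε * t)
  have h1 : e1 * t ≤ Real.exp (ε * t) := by
    have hq : (ε * t) ^ 2 / 2 ≤ Real.exp (ε * t) := by
      have := Real.pow_div_factorial_le_exp (x := ε * t) (by positivity) 2
      simpa [Nat.factorial] using this
    have : e1 * t ≤ (ε * t) ^ 2 / 2 := by
      have h4 : 4 * e1 ≤ ε ^ 2 * t := by
        rw [div_le_iff₀ (by positivity)] at ht4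
        linarith
      nlinarith
    linarith
  have h2 : (e1 * t) ^ j ≤ Real.exp (ε * m) := by
    calc (e1 * t) ^ j ≤ Real.exp (ε * t) ^ j :=
          pow_le_pow_left₀ (by positivity) h1 j
      _ = Real.exp (ε * t * j) := by rw [← Real.exp_nat_mul]; ring_nf
      _ = Real.exp (ε * m) := by rw [mul_assoc, htj]
  -- bound m^(n+1) ≤ C * exp(ε*m/2)
  have h3 : (m:ℝ) ^ (n+1) ≤ C * Real.exp (ε * m / 2) := by
    have hfac : (ε * m / 2) ^ (n+1) / (Nat.factorial (n+1)) ≤ Real.exp (ε * m / 2) :=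
      Real.pow_div_factorial_le_exp (x := ε * m / 2) (by positivity) (n+1)
    have hCge : ((Nat.factorial (n+1)) : ℝ) * (2 / ε) ^ (n+1) ≤ C := le_trans (by linarith) (le_max_right _ _)
    have key : (m:ℝ) ^ (n+1) = (2/ε)^(n+1) * (ε * m / 2) ^ (n+1) := by
      rw [← mul_pow]; congr 1; field_simp
    calc (m:ℝ) ^ (n+1) = (2/ε)^(n+1) * (ε * m / 2) ^ (n+1) := key
      _ ≤ (2/ε)^(n+1) * ((Nat.factorial (n+1)) * Real.exp (ε * m / 2)) := by
          rw [div_le_iff₀ (by positivity)] at hfac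
          gcongr
          linarith
      _ = ((Nat.factorial (n+1)) * (2/ε)^(n+1)) * Real.exp (ε * m / 2) := by ring
      _ ≤ C * Real.exp (ε * m / 2) := by gcongr
  -- Gamma lower bound
  have h4 : ((j:ℝ) / e1) ^ j ≤ Real.Gamma L := by
    have hmono : Real.Gamma ((j:ℝ)+1) ≤ Real.Gamma L := by
      rcases eq_or_lt_of_le hkL with h | h
      · push_cast at h; rw [h]
      · have := Real.Gamma_strictMonoOn_Ici (a := ((j:ℝ)+1)) (b := L)
          (by simp only [Set.mem_Ici]; linarith)
          (by simp only [Set.mem_Ici]; linarith)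
          (by exact_mod_cast h)
        exact this.le
    have hfact : Real.Gamma ((j:ℝ)+1) = ((Nat.factorial j : ℕ) : ℝ) := by
      exact_mod_cast Real.Gamma_nat_eq_factorial j
    have hjf : ((j:ℝ)/e1) ^ j ≤ ((Nat.factorial j : ℕ) : ℝ) := by
      have := Real.pow_div_factorial_le_exp (x := (j:ℝ)) (by positivity) j
      rw [div_le_iff₀ (by positivity)] at this
      rw [div_pow, div_le_iff₀ (by positivity)]
      calc (j:ℝ)^j ≤ Real.exp j * (Nat.factorial j : ℝ) := this
        _ = ((Nat.factorial j : ℕ) : ℝ) * e1 ^ j := by rw [← Real.exp_one_pow]; ring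
    rw [hfact] at hmono
    linarith
  -- combine: m^j ≤ exp(ε m) * Γ(L)
  have h5 : ((m:ℝ)) ^ j ≤ Real.exp (ε * m) * Real.Gamma L := by
    have hmj : (m:ℝ) ^ j = (e1 * t) ^ j * ((j:ℝ)/e1) ^ j := by
      rw [← mul_pow, ← htj]
      congr 1
      field_simp
    rw [hmj]
    have hexp : (0:ℝ) < Real.exp (ε * m) := Real.exp_pos _
    exact mul_le_mul h2 h4 (by positivity) hexp.le
  -- now the rpow manipulations
  have hGpos : 0 < Real.Gamma L := Real.Gamma_pos_of_pos hL0
  have step1 : (m:ℝ) ^ ((n : ℝ) + L / 2) ≤ (m:ℝ) ^ ((n : ℝ) + 1 + (j:ℝ) / 2) := by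
    apply Real.rpow_le_rpow_of_exponent_le hm1
    have : L ≤ (j:ℝ) + 2 := by
      have : L < ((j:ℝ)+1) + 1 := by exact_mod_cast hLk
      linarith
    linarith
  have step2 : (m:ℝ) ^ ((n : ℝ) + 1 + (j:ℝ) / 2)
      = (m:ℝ) ^ (n+1) * ((m:ℝ) ^ j) ^ ((1:ℝ)/2) := by
    rw [Real.rpow_add hmpos]
    congr 1
    · rw [← Real.rpow_natCast (m:ℝ) (n+1)]; push_cast; ring_nf
    · rw [← Real.rpow_natCast (m:ℝ) j, ← Real.rpow_mul hmpos.le]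
      congr 1; ring
  have step3 : ((m:ℝ) ^ j) ^ ((1:ℝ)/2) ≤ Real.exp (ε * m / 2) * Real.Gamma L ^ ((1:ℝ)/2) := by
    have := Real.rpow_le_rpow (by positivity) h5 (by norm_num : (0:ℝ) ≤ 1/2)
    calc ((m:ℝ) ^ j) ^ ((1:ℝ)/2) ≤ (Real.exp (ε * m) * Real.Gamma L) ^ ((1:ℝ)/2) := this
      _ = Real.exp (ε * m) ^ ((1:ℝ)/2) * Real.Gamma L ^ ((1:ℝ)/2) :=
          Real.mul_rpow (Real.exp_pos _).le hGpos.le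
      _ = Real.exp (ε * m / 2) * Real.Gamma L ^ ((1:ℝ)/2) := by
          rw [← Real.exp_mul]; ring_nf
  calc (m:ℝ) ^ ((n : ℝ) + L / 2) ≤ (m:ℝ) ^ ((n : ℝ) + 1 + (j:ℝ) / 2) := step1
    _ = (m:ℝ) ^ (n+1) * ((m:ℝ) ^ j) ^ ((1:ℝ)/2) := step2
    _ ≤ (C * Real.exp (ε * m / 2)) * (Real.exp (ε * m / 2) * Real.Gamma L ^ ((1:ℝ)/2)) := by
        apply mul_le_mul h3 step3 (by positivity) (by positivity)
    _ = C * (Real.exp (ε * m / 2) * Real.exp (ε * m / 2)) * Real.Gamma L ^ ((1:ℝ)/2) := by ring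
    _ = C * Real.exp (ε * m) * Real.Gamma L ^ ((1:ℝ)/2) := by
        rw [← Real.exp_add]; ring_nf
end
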